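/- arXiv:1711.01405 — 2 statements merged into one kernel-verified Lean document; each statement's English description precedes it below -/
import Mathlib

section
/- Let r, s be positive integers, n = r + s, and ζ = e^{2πi/n}. For any subset I of {1,...,n} with |I| = r and complement Ī, we have n^r = (∏_{j,k ∈ I, j ≠ k} |2 sin(π(j-k)/n)|) · (∏_{(j,k) ∈ I × Ī} |2 sin(π(j-k)/n)|). -/
open Finset Real

lemma vsi_abs_one_sub_exp (θ : ℝ) :
    ‖1 - Complex.exp (θ * Complex.I)‖ = |2 * Real.sin (θ / 2)| := by
  rw [Complex.norm_def, Complex.normSq_apply]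
  simp only [Complex.sub_re, Complex.one_re, Complex.exp_ofReal_mul_I_re,
    Complex.sub_im, Complex.one_im, Complex.exp_ofReal_mul_I_im]
  have h1 : Real.sin θ ^ 2 + Real.cos θ ^ 2 = 1 := Real.sin_sq_add_cos_sq θ
  have h2 : Real.cos (2 * (θ / 2)) = 2 * Real.cos (θ / 2) ^ 2 - 1 := Real.cos_two_mul (θ / 2)
  have h3 : Real.sin (θ / 2) ^ 2 + Real.cos (θ / 2) ^ 2 = 1 := Real.sin_sq_add_cos_sq (θ / 2)
  have h4 : (1 - Real.cos θ) * (1 - Real.cos θ) + (0 - Real.sin θ) * (0 - Real.sin θ)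
      = (2 * Real.sin (θ / 2)) ^ 2 := by
    have : Real.cos θ = 2 * Real.cos (θ / 2) ^ 2 - 1 := by
      rw [← h2]; ring_nf
    nlinarith
  rw [h4, Real.sqrt_sq_eq_abs]

lemma vsi_prod_two_sin (n : ℕ) (hn : 0 < n) :
    ∏ m ∈ Finset.Icc 1 (n - 1), (2 * Real.sin (Real.pi * m / n)) = n := by
  obtain ⟨N, rfl⟩ : ∃ N, n = N + 1 := ⟨n - 1, by omega⟩
  have hprim := Complex.isPrimitiveRoot_exp (N + 1) (by omega)
  have h := hprim.prod_one_sub_pow_eq_order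
  apply_fun (‖·‖) at h
  rw [norm_prod] at h
  have hrhs : ‖((N : ℂ) + 1)‖ = (N : ℝ) + 1 := by
    rw [show ((N : ℂ) + 1) = ((N + 1 : ℕ) : ℂ) by push_cast; ring, Complex.norm_natCast]
    push_cast; ring
  rw [hrhs] at h
  push_cast at h
  have hterm : ∀ k ∈ Finset.range N,
      ‖1 - Complex.exp (2 * Real.pi * Complex.I / (N + 1)) ^ (k + 1)‖
        = 2 * Real.sin (Real.pi * (k + 1) / (N + 1)) := by
    intro k hk
    rw [Finset.mem_range] at hk
    rw [← Complex.exp_nat_mul]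
    have harg : ((k : ℂ) + 1) * (2 * Real.pi * Complex.I / (N + 1))
        = ((2 * Real.pi * (k + 1) / (N + 1) : ℝ) : ℂ) * Complex.I := by
      push_cast
      have : ((N : ℂ) + 1) ≠ 0 := by
        exact_mod_cast (Nat.cast_add_one_ne_zero N : ((N : ℂ) + 1) ≠ 0)
      field_simp
    push_cast
    rw [harg, vsi_abs_one_sub_exp]
    rw [show 2 * Real.pi * ((k : ℝ) + 1) / ((N : ℝ) + 1) / 2
        = Real.pi * ((k : ℝ) + 1) / ((N : ℝ) + 1) by ring]
    have hpos : 0 < Real.sin (Real.pi * ((k : ℝ) + 1) / ((N : ℝ) + 1)) := by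
      apply Real.sin_pos_of_pos_of_lt_pi
      · positivity
      · rw [div_lt_iff₀ (by positivity)]
        have : (k : ℝ) + 1 < (N : ℝ) + 1 := by exact_mod_cast Nat.succ_lt_succ hk
        nlinarith [Real.pi_pos]
    rw [abs_of_pos (by linarith)]
  rw [Finset.prod_congr rfl hterm] at h
  simp only [Nat.add_sub_cancel]
  rw [← Finset.Ico_add_one_right_eq_Icc, Finset.prod_Ico_eq_prod_range]
  simp only [Nat.add_sub_cancel]
  rw [show ((N + 1 : ℕ) : ℝ) = (N : ℝ) + 1 by push_cast; ring]
  refine Eq.trans (Finset.prod_congr rfl ?_) h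
  intro k hk
  congr 2
  push_cast
  ring

lemma vsi_row (n j : ℕ) (hj1 : 1 ≤ j) (hjn : j ≤ n) :
    ∏ k ∈ (Finset.Icc 1 n).erase j, |2 * Real.sin (Real.pi * ((j : ℝ) - k) / n)| = n := by
  refine Eq.trans ?_ (vsi_prod_two_sin n (by omega))
  apply Finset.prod_bij (i := fun k _ => if k < j then j - k else j + n - k)
  · intro k hk
    simp only [Finset.mem_erase, Finset.mem_Icc] at hk
    simp only [Finset.mem_Icc]
    split <;> omega
  · intro k₁ hk₁ k₂ hk₂ hkk
    simp only [Finset.mem_erase, Finset.mem_Icc] at hk₁ hk₂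
    split at hkk <;> split at hkk <;> omega
  · intro m hm
    simp only [Finset.mem_Icc] at hm
    by_cases hmj : m < j
    · refine ⟨j - m, ?_, ?_⟩
      · simp only [Finset.mem_erase, Finset.mem_Icc]; omega
      · split <;> omega
    · refine ⟨j + n - m, ?_, ?_⟩
      · simp only [Finset.mem_erase, Finset.mem_Icc]; omega
      · split <;> omega
  · intro k hk
    simp only [Finset.mem_erase, Finset.mem_Icc] at hk
    by_cases hkj : k < j
    · simp only [if_pos hkj]
      have hc : ((j - k : ℕ) : ℝ) = (j : ℝ) - k := by
        push_cast [Nat.cast_sub hkj.le]; ring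
      rw [hc]
      rw [abs_of_pos]
      apply mul_pos (by norm_num : (0:ℝ) < 2)
      apply Real.sin_pos_of_pos_of_lt_pi
      · have h1 : (1 : ℝ) ≤ (j : ℝ) - k := by
          have : (k : ℝ) + 1 ≤ j := by exact_mod_cast hkj
          linarith
        have hn0 : (0 : ℝ) < n := by exact_mod_cast (by omega : 0 < n)
        positivity
      · rw [div_lt_iff₀ (by exact_mod_cast (by omega : 0 < n))]
        have : (j : ℝ) - k < n := by
          have : (j : ℝ) ≤ n := by exact_mod_cast hjn
          have : (1 : ℝ) ≤ k := by exact_mod_cast hk.2.1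
          linarith
        nlinarith [Real.pi_pos]
    · simp only [if_neg hkj]
      have hkgt : j < k := by omega
      have hc : ((j + n - k : ℕ) : ℝ) = (j : ℝ) + n - k := by
        push_cast [Nat.cast_sub (by omega : k ≤ j + n)]; ring
      rw [hc]
      have hn0 : (0 : ℝ) < n := by exact_mod_cast (by omega : 0 < n)
      have harg : Real.pi * ((j : ℝ) - k) / n = Real.pi * ((j : ℝ) + n - k) / n - Real.pi := by
        field_simp
        ring
      rw [harg, Real.sin_sub_pi]
      have hpos : 0 < Real.sin (Real.pi * ((j : ℝ) + n - k) / n) := by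
        apply Real.sin_pos_of_pos_of_lt_pi
        · have h1 : (1 : ℝ) ≤ (j : ℝ) + n - k := by
            have hk2 : (k : ℝ) ≤ n := by exact_mod_cast hk.2.2
            have hj2 : (1 : ℝ) ≤ j := by exact_mod_cast hj1
            linarith
          positivity
        · rw [div_lt_iff₀ hn0]
          have : (j : ℝ) + n - k < n := by
            have : (j : ℝ) + 1 ≤ k := by exact_mod_cast hkgt
            linarith
          nlinarith [Real.pi_pos]
      rw [abs_of_neg (show 2 * -Real.sin (Real.pi * ((j : ℝ) + n - k) / n) < 0 by nlinarith)]
      ring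

/-- Let `r, s > 0`, `n = r + s`. For any `I ⊆ {1,…,n}` with `|I| = r` and complement `Ī`,
`n^r = (∏_{j,k ∈ I, j ≠ k} |2 sin(π(j-k)/n)|) · (∏_{(j,k) ∈ I × Ī} |2 sin(π(j-k)/n)|)`.
(The first product is over ordered pairs of distinct elements of `I`; it is `1` if `|I| = 1`.) -/
theorem verlinde_sine_identity (r s : ℕ) (hr : 0 < r) (hs : 0 < s)
    (I : Finset ℕ) (hI : I ⊆ Finset.Icc 1 (r + s)) (hcard : I.card = r) :
    ((r + s : ℝ)) ^ r =
      (∏ j ∈ I, ∏ k ∈ I.erase j, |2 * Real.sin (Real.pi * ((j : ℝ) - k) / (r + s))|) *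
      (∏ j ∈ I, ∏ k ∈ Finset.Icc 1 (r + s) \ I,
        |2 * Real.sin (Real.pi * ((j : ℝ) - k) / (r + s))|) := by
  set n := r + s with hn
  rw [show ((r : ℝ) + s) = (n : ℝ) by push_cast [hn]; ring]
  rw [← Finset.prod_mul_distrib]
  have key : ∀ j ∈ I,
      (∏ k ∈ I.erase j, |2 * Real.sin (Real.pi * ((j : ℝ) - k) / n)|) *
      (∏ k ∈ Finset.Icc 1 n \ I, |2 * Real.sin (Real.pi * ((j : ℝ) - k) / n)|) = (n : ℝ) := by
    intro j hj
    have hdisj : Disjoint (I.erase j) (Finset.Icc 1 n \ I) := by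
      apply Finset.disjoint_left.2
      intro a ha hb
      exact (Finset.mem_sdiff.1 hb).2 (Finset.mem_of_mem_erase ha)
    rw [← Finset.prod_union hdisj]
    have hunion : I.erase j ∪ (Finset.Icc 1 n \ I) = (Finset.Icc 1 n).erase j := by
      ext a
      simp only [Finset.mem_union, Finset.mem_erase, Finset.mem_sdiff]
      constructor
      · rintro (⟨hne, haI⟩ | ⟨ha, haI⟩)
        · exact ⟨hne, hI haI⟩
        · exact ⟨fun h => haI (h ▸ hj), ha⟩
      · rintro ⟨hne, ha⟩
        by_cases haI : a ∈ I
        · exact Or.inl ⟨hne, haI⟩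
        · exact Or.inr ⟨ha, haI⟩
    rw [hunion]
    have hjm := Finset.mem_Icc.1 (hI hj)
    exact vsi_row n j hjm.1 hjm.2
  rw [Finset.prod_congr rfl key, Finset.prod_const, hcard]
end

section
/- Let n ≥ 2 and ζ = e^{2πi/n}. For any two r-element subsets I, J of {1,...,n}, letting s_a(ζ^I) denote the Schur polynomial of a partition a (with at most r parts each ≤ n-r) evaluated at the tuple (ζ^j)_{j∈I}, the orthogonality relation Σ_a conj(s_a(ζ^I)) · s_a(ζ^J) = δ_{I,J} · n^r / Vand(ζ^I) holds, where Vand(ζ^I) = ∏_{j,k∈I, j≠k} |ζ^j - ζ^k| (or 1 if r = 1), and the sum is over all partitions a fitting in an r × (n-r) box. -/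
/-- The Schur polynomial of a partition `a` (with at most `r` parts), evaluated at a tuple
`z : Fin r → ℂ`, defined by the bialternant formula
`s_a(z) = det(z_i^{a_j + r - 1 - j}) / det(z_i^{r - 1 - j})`. -/
noncomputable def schurEval (r : ℕ) (a : Fin r → ℕ) (z : Fin r → ℂ) : ℂ :=
  Matrix.det (Matrix.of fun i j : Fin r => z i ^ (a j + (r - 1 - (j : ℕ)))) /
    Matrix.det (Matrix.of fun i j : Fin r => z i ^ (r - 1 - (j : ℕ)))

open Finset

/-- helper: strict antitone nat-valued tuples satisfy `f k + k ≤ f j + j` for `j ≤ k`. -/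
private lemma strictAnti_add_le {r : ℕ} {f : Fin r → ℕ} (hf : StrictAnti f) :
    ∀ (j k : Fin r), j ≤ k → f k + (k : ℕ) ≤ f j + (j : ℕ) := by
  have main : ∀ (m : ℕ) (j k : Fin r), (k : ℕ) = (j : ℕ) + m → f k + (k : ℕ) ≤ f j + (j : ℕ) := by
    intro m
    induction m with
    | zero => intro j k h; have : j = k := Fin.ext (by omega); subst this; rfl
    | succ m ih =>
      intro j k h
      have hk' : (j : ℕ) + m < r := by have := k.isLt; omega
      set k' : Fin r := ⟨(j : ℕ) + m, hk'⟩ with hk'd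
      have hv : (k' : ℕ) = (j : ℕ) + m := rfl
      have h1 : f k < f k' := hf (Fin.lt_def.mpr (by omega))
      have h2 := ih j k' rfl
      omega
  intro j k hjk
  exact main ((k : ℕ) - (j : ℕ)) j k (by have := Fin.le_def.mp hjk; omega)

private lemma strictAnti_lb {r : ℕ} {f : Fin r → ℕ} (hf : StrictAnti f) (j : Fin r) :
    r - 1 - (j : ℕ) ≤ f j := by
  have hr : 0 < r := j.pos
  have := strictAnti_add_le hf j ⟨r - 1, by omega⟩ (Fin.le_def.mpr (by simp; omega))
  simp at this
  omega


private lemma det_pow_perm {r : ℕ} (u : Fin r → ℂ) (μ : Fin r → ℕ) (τ : Equiv.Perm (Fin r)) :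
    Matrix.det (Matrix.of fun i j : Fin r => u i ^ (μ (τ⁻¹ j))) =
      (Equiv.Perm.sign τ : ℂ) * Matrix.det (Matrix.of fun i j : Fin r => u i ^ (μ j)) := by
  have h1 : (Matrix.of fun i j : Fin r => u i ^ (μ (τ⁻¹ j)))
      = (Matrix.of fun i j : Fin r => u i ^ (μ j)).submatrix id ⇑τ⁻¹ := rfl
  rw [h1, Matrix.det_permute', Equiv.Perm.sign_inv]

/-- expansion of a product of two "power" determinants over a single determinant times
a monomial. -/
private lemma det_mul_det_expand {r : ℕ} (u v : Fin r → ℂ) (μ : Fin r → ℕ) :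
    Matrix.det (Matrix.of fun i j : Fin r => u i ^ (μ j)) *
      Matrix.det (Matrix.of fun i j : Fin r => v i ^ (μ j)) =
    ∑ τ : Equiv.Perm (Fin r),
      Matrix.det (Matrix.of fun i j : Fin r => u i ^ (μ (τ⁻¹ j))) * ∏ j, v j ^ (μ (τ⁻¹ j)) := by
  rw [Matrix.det_apply (Matrix.of fun i j : Fin r => v i ^ (μ j)), Finset.mul_sum]
  refine Finset.sum_congr rfl fun τ _ => ?_
  rw [det_pow_perm]
  have h2 : ∏ j, v j ^ (μ (τ⁻¹ j)) = ∏ i, v (τ i) ^ (μ i) := by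
    exact (Fintype.prod_equiv τ (fun i => v (τ i) ^ (μ i))
      (fun j => v j ^ (μ (τ⁻¹ j))) (fun x => by simp)).symm
  rw [h2]
  simp only [Matrix.of_apply, Units.smul_def, zsmul_eq_mul]
  ring

private lemma sum_g_eq_det {n r : ℕ} (u v : Fin r → ℂ) :
    ∑ μ : Fin r → Fin n,
        Matrix.det (Matrix.of fun i j : Fin r => u i ^ (μ j : ℕ)) * ∏ j, v j ^ (μ j : ℕ)
      = Matrix.det (Matrix.of fun i j : Fin r => ∑ m : Fin n, (u i * v j) ^ (m : ℕ)) := by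
  rw [Matrix.det_apply (Matrix.of fun i j : Fin r => ∑ m : Fin n, (u i * v j) ^ (m : ℕ))]
  simp_rw [Matrix.det_apply, Finset.sum_mul, Matrix.of_apply]
  rw [Finset.sum_comm]
  refine Finset.sum_congr rfl fun σ _ => ?_
  have h1 : ∀ μ : Fin r → Fin n,
      (Equiv.Perm.sign σ • ∏ i, u (σ i) ^ (μ i : ℕ)) * ∏ j, v j ^ (μ j : ℕ)
        = Equiv.Perm.sign σ • ∏ j, (u (σ j) * v j) ^ (μ j : ℕ) := by
    intro μ
    simp only [Units.smul_def, zsmul_eq_mul, mul_pow, Finset.prod_mul_distrib]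
    ring
  simp_rw [h1]
  rw [← Finset.smul_sum]
  congr 1
  have := Finset.prod_univ_sum (fun _ : Fin r => (Finset.univ : Finset (Fin n)))
    (fun j m => (u (σ j) * v j) ^ (m : ℕ))
  rw [Fintype.piFinset_univ] at this
  exact this.symm

private lemma schur_key (n r : ℕ) (hr : 0 < r) (hrn : r ≤ n) (u v : Fin r → ℂ) :
    (∑ a ∈ Finset.univ.filter
        (fun a : Fin r → Fin (n - r + 1) => ∀ i j : Fin r, i ≤ j → a j ≤ a i),
      Matrix.det (Matrix.of fun i j : Fin r => u i ^ ((a j : ℕ) + (r - 1 - (j : ℕ)))) *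
        Matrix.det (Matrix.of fun i j : Fin r => v i ^ ((a j : ℕ) + (r - 1 - (j : ℕ)))))
      = Matrix.det (Matrix.of fun i j : Fin r => ∑ m : Fin n, (u i * v j) ^ (m : ℕ)) := by
  have hbound : ∀ (a : Fin r → Fin (n - r + 1)) (j : Fin r),
      (a j : ℕ) + (r - 1 - (j : ℕ)) < n := by
    intro a j
    have h1 := (a j).isLt
    have h2 := j.isLt
    omega
  set P := Finset.univ.filter
    (fun a : Fin r → Fin (n - r + 1) => ∀ i j : Fin r, i ≤ j → a j ≤ a i) with hP
  set Λ : (Fin r → Fin (n - r + 1)) → (Fin r → Fin n) :=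
    fun a j => ⟨(a j : ℕ) + (r - 1 - (j : ℕ)), hbound a j⟩ with hΛ
  set g : (Fin r → Fin n) → ℂ := fun μ =>
    Matrix.det (Matrix.of fun i j : Fin r => u i ^ (μ j : ℕ)) * ∏ j, v j ^ (μ j : ℕ) with hg
  have hΛanti : ∀ a ∈ P, StrictAnti (Λ a) := by
    intro a ha
    intro j k hjk
    rw [hP, Finset.mem_filter] at ha
    have h1 : (a k : ℕ) ≤ (a j : ℕ) := ha.2 j k hjk.le
    have h2 := j.isLt
    have h3 := k.isLt
    have h4 := Fin.lt_def.mp hjk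
    exact Fin.lt_def.mpr (by simp only [hΛ]; omega)
  calc
    (∑ a ∈ P,
      Matrix.det (Matrix.of fun i j : Fin r => u i ^ ((a j : ℕ) + (r - 1 - (j : ℕ)))) *
        Matrix.det (Matrix.of fun i j : Fin r => v i ^ ((a j : ℕ) + (r - 1 - (j : ℕ)))))
        = ∑ a ∈ P, ∑ τ : Equiv.Perm (Fin r), g (Λ a ∘ ⇑τ⁻¹) := by
          refine Finset.sum_congr rfl fun a _ => ?_
          have := det_mul_det_expand u v (fun j => (Λ a j : ℕ))
          simp only [hΛ] at this ⊢
          rw [this]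
          rfl
    _ = ∑ p ∈ P ×ˢ (Finset.univ : Finset (Equiv.Perm (Fin r))), g (Λ p.1 ∘ ⇑p.2⁻¹) := by
          rw [Finset.sum_product]
    _ = ∑ μ ∈ Finset.univ.filter (fun μ : Fin r → Fin n => Function.Injective μ), g μ := by
          refine Finset.sum_bij (fun p _ => Λ p.1 ∘ ⇑p.2⁻¹) ?_ ?_ ?_ ?_
          · rintro ⟨a, τ⟩ hp
            rw [Finset.mem_product] at hp
            rw [Finset.mem_filter]
            exact ⟨Finset.mem_univ _,
              ((hΛanti a hp.1).injective).comp (Equiv.injective _)⟩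
          · rintro ⟨a, τ⟩ hp ⟨b, σ⟩ hq he
            rw [Finset.mem_product] at hp hq
            have ha := hΛanti a hp.1
            have hb := hΛanti b hq.1
            -- Λ a = Λ b ∘ π with π = σ⁻¹ ∘ τ
            have he' : ∀ j, Λ a j = Λ b (σ⁻¹ (τ j)) := by
              intro j
              have := congrFun he (τ j)
              simpa using this
            have hπ : StrictMono (fun j => σ⁻¹ (τ j)) := by
              intro j k hjk
              have h1 : Λ b (σ⁻¹ (τ k)) < Λ b (σ⁻¹ (τ j)) := by
                rw [← he', ← he']; exact ha hjk
              exact (hb.lt_iff_gt).mp h1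
            have hsurj : Function.Surjective (fun j => σ⁻¹ (τ j)) :=
              (Equiv.surjective σ⁻¹).comp (Equiv.surjective τ)
            have hrange : Set.range (fun j => σ⁻¹ (τ j)) = Set.range (id : Fin r → Fin r) := by
              rw [Set.range_eq_univ.mpr hsurj, Set.range_id]
            haveI : WellFoundedLT (Fin r) := inferInstance
            have hπid : (fun j => σ⁻¹ (τ j)) = id := (hπ.range_inj strictMono_id).mp hrange
            have hτσ : τ = σ := by
              apply Equiv.ext
              intro j
              have h := congrFun hπid j
              simp only [id_eq] at h
              calc τ j = σ (σ⁻¹ (τ j)) := by simp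
                _ = σ j := by rw [h]
            have hab : a = b := by
              funext j
              have h1 : Λ a j = Λ b j := by rw [he' j, congrFun hπid j]; rfl
              have h2 : (a j : ℕ) + (r - 1 - (j : ℕ)) = (b j : ℕ) + (r - 1 - (j : ℕ)) := by
                simpa [hΛ, Fin.ext_iff] using h1
              exact Fin.ext (by omega)
            simp [hab, hτσ]
          · intro μ hμ
            rw [Finset.mem_filter] at hμ
            obtain ⟨-, hinj⟩ := hμ
            have hS : (Finset.univ.image μ).card = r := by
              rw [Finset.card_image_of_injective _ hinj, Finset.card_univ, Fintype.card_fin]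
            set S := Finset.univ.image μ with hSd
            set e := S.orderIsoOfFin hS with hed
            set lam : Fin r → Fin n := fun j => (e j.rev : Fin n) with hlamd
            have hanti : StrictAnti lam := by
              intro j k hjk
              have h1 : k.rev < j.rev := Fin.rev_lt_rev.mpr hjk
              exact Subtype.coe_lt_coe.mpr (e.strictMono h1)
            have hnatanti : StrictAnti (fun j => ((lam j : Fin n) : ℕ)) := by
              intro j k hjk
              exact_mod_cast hanti hjk
            have hlb : ∀ j : Fin r, r - 1 - (j : ℕ) ≤ (lam j : ℕ) :=
              fun j => strictAnti_lb hnatanti j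
            have hub : ∀ j : Fin r, (lam j : ℕ) + (j : ℕ) ≤ n - 1 := by
              intro j
              have h0 : (⟨0, hr⟩ : Fin r) ≤ j := Fin.le_def.mpr (by simp)
              have := strictAnti_add_le hnatanti ⟨0, hr⟩ j h0
              have h2 := (lam ⟨0, hr⟩).isLt
              simp at this
              omega
            set a : Fin r → Fin (n - r + 1) := fun j =>
              ⟨(lam j : ℕ) - (r - 1 - (j : ℕ)), by
                have h1 := hub j
                have h2 := j.isLt
                omega⟩ with had
            have haP : a ∈ P := by
              rw [hP, Finset.mem_filter]
              refine ⟨Finset.mem_univ _, fun i j hij => ?_⟩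
              have h1 := strictAnti_add_le hnatanti i j hij
              have h2 := hlb i
              have h3 := hlb j
              have h4 := Fin.le_def.mp hij
              have h5 := j.isLt
              exact Fin.le_def.mpr (by simp only [had]; omega)
            have hΛa : Λ a = lam := by
              funext j
              have h1 := hlb j
              exact Fin.ext (by simp only [hΛ, had]; omega)
            have hmem : ∀ j, μ j ∈ S := by
              intro j; rw [hSd]; exact Finset.mem_image_of_mem _ (Finset.mem_univ j)
            set π : Fin r → Fin r := fun j => (e.symm ⟨μ j, hmem j⟩).rev with hπd
            have hπinj : Function.Injective π := by
              intro i j hij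
              have h1 := Fin.rev_injective hij
              have h2 := e.symm.injective h1
              have h3 : μ i = μ j := congrArg Subtype.val h2
              exact hinj h3
            have hπbij : Function.Bijective π := Finite.injective_iff_bijective.mp hπinj
            set τe : Equiv.Perm (Fin r) := Equiv.ofBijective π hπbij with hτed
            refine ⟨(a, τe⁻¹), Finset.mem_product.mpr ⟨haP, Finset.mem_univ _⟩, ?_⟩
            funext j
            have h1 : (τe⁻¹)⁻¹ j = π j := by simp [hτed]
            have h2 : lam (π j) = μ j := by
              simp only [hlamd, hπd, Fin.rev_rev, OrderIso.apply_symm_apply]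
            simp only [Function.comp_apply, h1, hΛa, h2]
          · rintro ⟨a, τ⟩ hp
            rfl
    _ = ∑ μ : Fin r → Fin n, g μ := by
          refine Finset.sum_subset (Finset.filter_subset _ _) ?_
          intro μ _ hμ
          rw [Finset.mem_filter] at hμ
          push_neg at hμ
          have hni : ¬ Function.Injective μ := hμ (Finset.mem_univ _)
          rw [Function.not_injective_iff] at hni
          obtain ⟨i, j, hij, hne⟩ := hni
          have : Matrix.det (Matrix.of fun i' j' : Fin r => u i' ^ (μ j' : ℕ)) = 0 := by
            refine Matrix.det_zero_of_column_eq hne fun k => ?_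
            simp [hij]
          rw [hg]
          simp only [this, zero_mul]
    _ = Matrix.det (Matrix.of fun i j : Fin r => ∑ m : Fin n, (u i * v j) ^ (m : ℕ)) :=
          sum_g_eq_det u v

private lemma geom_entry (n : ℕ) (hn : 0 < n) (p q : ℕ) (hp : 1 ≤ p) (hp' : p ≤ n)
    (hq : 1 ≤ q) (hq' : q ≤ n) :
    ∑ m : Fin n, ((starRingEnd ℂ) (Complex.exp (2 * Real.pi * Complex.I / n) ^ p) *
        Complex.exp (2 * Real.pi * Complex.I / n) ^ q) ^ (m : ℕ)
      = if p = q then (n : ℂ) else 0 := by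
  set ζ := Complex.exp (2 * Real.pi * Complex.I / n) with hζd
  have hζ : IsPrimitiveRoot ζ n := Complex.isPrimitiveRoot_exp n (by omega)
  have hζ0 : ζ ≠ 0 := Complex.exp_ne_zero _
  have hconj : (starRingEnd ℂ) ζ = ζ⁻¹ := by
    rw [hζd, ← Complex.exp_conj, ← Complex.exp_neg]
    congr 1
    rw [map_div₀]
    simp [Complex.conj_I, map_ofNat]
    ring
  have hx : (starRingEnd ℂ) (ζ ^ p) * ζ ^ q = (ζ ^ p)⁻¹ * ζ ^ q := by
    rw [map_pow, hconj, inv_pow]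
  rw [hx]
  by_cases hpq : p = q
  · subst hpq
    rw [inv_mul_cancel₀ (pow_ne_zero _ hζ0)]
    simp
  · rw [if_neg hpq]
    set x : ℂ := (ζ ^ p)⁻¹ * ζ ^ q with hxd
    have hxn : x ^ n = 1 := by
      rw [hxd, mul_pow, inv_pow, ← pow_mul, ← pow_mul, mul_comm p n, mul_comm q n,
        pow_mul, pow_mul, hζ.pow_eq_one, one_pow, one_pow, inv_one, one_mul]
    have hx1 : x ≠ 1 := by
      intro h
      have h2 : ζ ^ q = ζ ^ p := by
        have := congrArg (fun z => z * ζ ^ p) h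
        simp only [hxd] at this
        field_simp at this
        linear_combination this
      have h3 : ζ ^ ((q : ℤ) - (p : ℤ)) = 1 := by
        rw [zpow_sub₀ hζ0, zpow_natCast, zpow_natCast, h2, div_self (pow_ne_zero _ hζ0)]
      have h4 : (n : ℤ) ∣ (q : ℤ) - (p : ℤ) := (hζ.zpow_eq_one_iff_dvd _).mp h3
      obtain ⟨c, hc⟩ := h4
      have hb1 : -(n : ℤ) < (q : ℤ) - (p : ℤ) := by omega
      have hb2 : (q : ℤ) - (p : ℤ) < (n : ℤ) := by omega
      have hc0 : c = 0 := by
        rcases lt_trichotomy c 0 with h | h | h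
        · nlinarith
        · exact h
        · nlinarith
      rw [hc0, mul_zero] at hc
      omega
    rw [Fin.sum_univ_eq_sum_range (fun m => x ^ m), geom_sum_eq hx1, hxn, sub_self, zero_div]

private lemma conj_det_mul_det (r : ℕ) (w : Fin r → ℂ) :
    (starRingEnd ℂ) (Matrix.det (Matrix.of fun i j : Fin r => w i ^ (r - 1 - (j : ℕ)))) *
      Matrix.det (Matrix.of fun i j : Fin r => w i ^ (r - 1 - (j : ℕ)))
    = ((∏ i : Fin r, ∏ j ∈ Finset.Ioi i, Complex.normSq (w j - w i) : ℝ) : ℂ) := by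
  have hM : (Matrix.of fun i j : Fin r => w i ^ (r - 1 - (j : ℕ)))
      = (Matrix.vandermonde w).submatrix id ⇑(Fin.revPerm) := by
    ext i j
    simp only [Matrix.of_apply, Matrix.submatrix_apply, Matrix.vandermonde_apply, id_eq]
    congr 1
    have := j.isLt
    rw [Fin.revPerm_apply, Fin.val_rev]
    omega
  rw [hM, Matrix.det_permute']
  set s : ℂ := ((Equiv.Perm.sign (Fin.revPerm : Equiv.Perm (Fin r)) : ℤ) : ℂ) with hs
  have hsign : ∀ z : ℂ, (starRingEnd ℂ) (s * z) * (s * z) = (starRingEnd ℂ) z * z := by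
    intro z
    have h1 : (starRingEnd ℂ) s = s := by
      rw [hs]
      exact map_intCast _ _
    have h2 : s * s = 1 := by
      rw [hs, ← Int.cast_mul, ← Units.val_mul, Int.units_mul_self]
      simp
    rw [map_mul, h1]
    calc s * (starRingEnd ℂ) z * (s * z) = (s * s) * ((starRingEnd ℂ) z * z) := by ring
      _ = (starRingEnd ℂ) z * z := by rw [h2, one_mul]
  rw [hsign]
  rw [Matrix.det_vandermonde]
  rw [mul_comm, Complex.mul_conj]
  congr 1
  rw [map_prod Complex.normSq]
  refine Finset.prod_congr rfl fun i _ => ?_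
  rw [map_prod Complex.normSq]

private lemma prod_pairs_eq (r : ℕ) (I : Finset ℕ) (hIc : I.card = r) (ζ : ℂ) :
    (∏ j ∈ I, ∏ k ∈ I.erase j, ‖ζ ^ j - ζ ^ k‖)
      = ∏ i : Fin r, ∏ j ∈ Finset.Ioi i, Complex.normSq
          (ζ ^ ((I.orderIsoOfFin hIc j : ℕ)) - ζ ^ ((I.orderIsoOfFin hIc i : ℕ))) := by
  set e := I.orderIsoOfFin hIc with hed
  set w : Fin r → ℂ := fun i => ζ ^ ((e i : ℕ)) with hwd
  have step1 : (∏ j ∈ I, ∏ k ∈ I.erase j, ‖ζ ^ j - ζ ^ k‖)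
      = ∏ i : Fin r, ∏ i' ∈ Finset.univ.erase i, ‖w i - w i'‖ := by
    refine (Finset.prod_bij (fun (i : Fin r) _ => ((e i : ℕ) : ℕ)) ?_ ?_ ?_ ?_).symm
    · intro i _
      exact (e i).2
    · intro i _ i' _ h
      exact e.injective (Subtype.ext h)
    · intro j hj
      exact ⟨e.symm ⟨j, hj⟩, Finset.mem_univ _, by simp⟩
    · intro i _
      have inner : (∏ i' ∈ Finset.univ.erase i, ‖w i - w i'‖)
          = ∏ k ∈ I.erase ((e i : ℕ)), ‖ζ ^ ((e i : ℕ)) - ζ ^ k‖ := by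
        refine Finset.prod_bij (fun (i' : Fin r) _ => ((e i' : ℕ) : ℕ)) ?_ ?_ ?_ ?_
        · intro i' hi'
          rw [Finset.mem_erase]
          refine ⟨fun h => (Finset.mem_erase.mp hi').1 (e.injective (Subtype.ext h)), (e i').2⟩
        · intro i' _ i'' _ h
          exact e.injective (Subtype.ext h)
        · intro k hk
          rw [Finset.mem_erase] at hk
          refine ⟨e.symm ⟨k, hk.2⟩, ?_, by simp⟩
          rw [Finset.mem_erase]
          refine ⟨fun h => hk.1 ?_, Finset.mem_univ _⟩
          have := congrArg (fun z => ((e z : ℕ) : ℕ)) h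
          simpa using this
        · intro i' _
          rfl
      exact inner
  rw [step1]
  have hsplit : ∀ i : Fin r, (Finset.univ.erase i) = Finset.Iio i ∪ Finset.Ioi i := by
    intro i
    ext x
    simp only [Finset.mem_erase, Finset.mem_univ, and_true, Finset.mem_union, Finset.mem_Iio,
      Finset.mem_Ioi]
    constructor
    · exact fun h => h.lt_or_gt
    · rintro (h | h)
      · exact ne_of_lt h
      · exact ne_of_gt h
  have hdisj : ∀ i : Fin r, Disjoint (Finset.Iio i) (Finset.Ioi i) := by
    intro i
    rw [Finset.disjoint_left]
    intro x hx hx'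
    rw [Finset.mem_Iio] at hx
    rw [Finset.mem_Ioi] at hx'
    exact absurd hx (not_lt.mpr hx'.le)
  calc ∏ i : Fin r, ∏ i' ∈ Finset.univ.erase i, ‖w i - w i'‖
      = ∏ i : Fin r, ((∏ i' ∈ Finset.Iio i, ‖w i - w i'‖) *
          (∏ i' ∈ Finset.Ioi i, ‖w i - w i'‖)) := by
        refine Finset.prod_congr rfl fun i _ => ?_
        rw [hsplit i, Finset.prod_union (hdisj i)]
    _ = (∏ i : Fin r, ∏ i' ∈ Finset.Iio i, ‖w i - w i'‖) *
          (∏ i : Fin r, ∏ i' ∈ Finset.Ioi i, ‖w i - w i'‖) := by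
        rw [Finset.prod_mul_distrib]
    _ = (∏ i : Fin r, ∏ i' ∈ Finset.Ioi i, ‖w i' - w i‖) *
          (∏ i : Fin r, ∏ i' ∈ Finset.Ioi i, ‖w i - w i'‖) := by
        congr 1
        refine Finset.prod_comm' ?_
        intro x y
        simp [Finset.mem_Iio, Finset.mem_Ioi]
    _ = ∏ i : Fin r, ∏ i' ∈ Finset.Ioi i, (‖w i' - w i‖ * ‖w i - w i'‖) := by
        rw [← Finset.prod_mul_distrib]
        refine Finset.prod_congr rfl fun i _ => ?_
        rw [← Finset.prod_mul_distrib]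
    _ = ∏ i : Fin r, ∏ j ∈ Finset.Ioi i, Complex.normSq (ζ ^ ((e j : ℕ)) - ζ ^ ((e i : ℕ))) := by
        refine Finset.prod_congr rfl fun i _ => Finset.prod_congr rfl fun j _ => ?_
        have h1 : ‖w i - w j‖ = ‖w j - w i‖ := by
          exact norm_sub_rev _ _
        rw [h1, Complex.normSq_eq_norm_sq, pow_two]


private lemma main_sum (n r : ℕ) (hn : 2 ≤ n) (hr : 0 < r) (hrn : r ≤ n)
    (I J : Finset ℕ) (hI : I ⊆ Finset.Icc 1 n) (hJ : J ⊆ Finset.Icc 1 n)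
    (hIc : I.card = r) (hJc : J.card = r) :
    (∑ a ∈ Finset.univ.filter
        (fun a : Fin r → Fin (n - r + 1) => ∀ i j : Fin r, i ≤ j → a j ≤ a i),
      (starRingEnd ℂ)
          (schurEval r (fun i => (a i : ℕ))
            (fun i => Complex.exp (2 * Real.pi * Complex.I / n) ^
              ((I.orderIsoOfFin hIc i : ℕ)))) *
        schurEval r (fun i => (a i : ℕ))
          (fun i => Complex.exp (2 * Real.pi * Complex.I / n) ^
            ((J.orderIsoOfFin hJc i : ℕ))))
      = Matrix.det (Matrix.of fun i j : Fin r =>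
            if ((I.orderIsoOfFin hIc i : ℕ) = (J.orderIsoOfFin hJc j : ℕ))
              then (n : ℂ) else 0) /
          ((starRingEnd ℂ) (Matrix.det (Matrix.of fun i j : Fin r =>
              (Complex.exp (2 * Real.pi * Complex.I / n) ^
                ((I.orderIsoOfFin hIc i : ℕ))) ^ (r - 1 - (j : ℕ)))) *
            Matrix.det (Matrix.of fun i j : Fin r =>
              (Complex.exp (2 * Real.pi * Complex.I / n) ^
                ((J.orderIsoOfFin hJc i : ℕ))) ^ (r - 1 - (j : ℕ)))) := by
  set ζ : ℂ := Complex.exp (2 * Real.pi * Complex.I / n) with hζd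
  set eI := I.orderIsoOfFin hIc with heId
  set eJ := J.orderIsoOfFin hJc with heJd
  set w : Fin r → ℂ := fun i => ζ ^ ((eI i : ℕ)) with hwd
  set v : Fin r → ℂ := fun i => ζ ^ ((eJ i : ℕ)) with hvd
  set u : Fin r → ℂ := fun i => (starRingEnd ℂ) (w i) with hud
  have hterm : ∀ a : Fin r → Fin (n - r + 1),
      (starRingEnd ℂ) (schurEval r (fun i => (a i : ℕ)) w) *
          schurEval r (fun i => (a i : ℕ)) v
        = (Matrix.det (Matrix.of fun i j : Fin r => u i ^ ((a j : ℕ) + (r - 1 - (j : ℕ)))) *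
            Matrix.det (Matrix.of fun i j : Fin r => v i ^ ((a j : ℕ) + (r - 1 - (j : ℕ))))) /
          ((starRingEnd ℂ)
              (Matrix.det (Matrix.of fun i j : Fin r => w i ^ (r - 1 - (j : ℕ)))) *
            Matrix.det (Matrix.of fun i j : Fin r => v i ^ (r - 1 - (j : ℕ)))) := by
    intro a
    rw [schurEval, schurEval, map_div₀, div_mul_div_comm]
    congr 2
    rw [RingHom.map_det]
    congr 1
    ext i j
    simp only [RingHom.mapMatrix_apply, Matrix.map_apply, Matrix.of_apply, map_pow, hud]
  rw [Finset.sum_congr rfl fun a _ => hterm a, ← Finset.sum_div, schur_key n r hr hrn u v]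
  have hM : (Matrix.of fun i j : Fin r => ∑ m : Fin n, (u i * v j) ^ (m : ℕ))
      = Matrix.of (fun i j : Fin r =>
          if ((eI i : ℕ) = (eJ j : ℕ)) then (n : ℂ) else 0) := by
    ext i j
    simp only [Matrix.of_apply]
    have h1 := Finset.mem_Icc.mp (hI (eI i).2)
    have h2 := Finset.mem_Icc.mp (hJ (eJ j).2)
    have hge := geom_entry n (by omega) ((eI i : ℕ)) ((eJ j : ℕ)) h1.1 h1.2 h2.1 h2.2
    simpa [hud, hwd, hvd, hζd] using hge
  rw [hM]


/-- Orthogonality of Schur polynomial values at roots of unity (Rietsch, Prop. 4.3(3)):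
for `n ≥ 2`, `ζ = e^{2πi/n}`, and `r`-element subsets `I, J ⊆ {1,…,n}`, summing over all
partitions `a` fitting in an `r × (n-r)` box,
`Σ_a conj(s_a(ζ^I)) · s_a(ζ^J) = δ_{I,J} · n^r / Vand(ζ^I)` where
`Vand(ζ^I) = ∏_{j,k ∈ I, j≠k} |ζ^j - ζ^k|` (an empty product, i.e. `1`, if `r = 1`). -/
theorem schur_orthogonality (n r : ℕ) (hn : 2 ≤ n) (hr : 0 < r) (hrn : r ≤ n)
    (I J : Finset ℕ) (hI : I ⊆ Finset.Icc 1 n) (hJ : J ⊆ Finset.Icc 1 n)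
    (hIc : I.card = r) (hJc : J.card = r) :
    (∑ a ∈ Finset.univ.filter
        (fun a : Fin r → Fin (n - r + 1) => ∀ i j : Fin r, i ≤ j → a j ≤ a i),
      (starRingEnd ℂ)
          (schurEval r (fun i => (a i : ℕ))
            (fun i => Complex.exp (2 * Real.pi * Complex.I / n) ^
              ((I.orderIsoOfFin hIc i : ℕ)))) *
        schurEval r (fun i => (a i : ℕ))
          (fun i => Complex.exp (2 * Real.pi * Complex.I / n) ^
            ((J.orderIsoOfFin hJc i : ℕ))))
      = if I = J then
          (n : ℂ) ^ r /
            ((∏ j ∈ I, ∏ k ∈ I.erase j,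
              ‖Complex.exp (2 * Real.pi * Complex.I / n) ^ j
                - Complex.exp (2 * Real.pi * Complex.I / n) ^ k‖ : ℝ) : ℂ)
        else 0 := by
  rw [main_sum n r hn hr hrn I J hI hJ hIc hJc]
  set ζ : ℂ := Complex.exp (2 * Real.pi * Complex.I / n) with hζd
  set eI := I.orderIsoOfFin hIc with heId
  set eJ := J.orderIsoOfFin hJc with heJd
  rcases eq_or_ne I J with hIJ | hIJ
  · subst hIJ
    rw [if_pos rfl]
    have heJI : eJ = eI := rfl
    have hdet : Matrix.det (Matrix.of fun i j : Fin r =>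
        if ((eI i : ℕ) = (eJ j : ℕ)) then (n : ℂ) else 0) = (n : ℂ) ^ r := by
      have hm : (Matrix.of fun i j : Fin r =>
          if ((eI i : ℕ) = (eJ j : ℕ)) then (n : ℂ) else 0)
          = Matrix.diagonal (fun _ : Fin r => (n : ℂ)) := by
        ext i j
        rw [heJI]
        by_cases h : i = j
        · subst h
          simp [Matrix.diagonal]
        · have hne : (eI i : ℕ) ≠ (eI j : ℕ) := by
            intro hc
            exact h (eI.injective (Subtype.ext hc))
          simp [Matrix.diagonal, h, hne]
      rw [hm, Matrix.det_diagonal, Finset.prod_const, Finset.card_univ, Fintype.card_fin]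
    rw [hdet, heJI]
    congr 1
    rw [conj_det_mul_det r (fun i => ζ ^ ((eI i : ℕ)))]
    exact congrArg _ (prod_pairs_eq r I hIc ζ).symm
  · rw [if_neg hIJ]
    have hns : ¬ I ⊆ J := by
      intro hsub
      exact hIJ (Finset.eq_of_subset_of_card_le hsub (by rw [hIc, hJc]))
    obtain ⟨x, hxI, hxJ⟩ := Finset.not_subset.mp hns
    have hdet0 : Matrix.det (Matrix.of fun i j : Fin r =>
        if ((eI i : ℕ) = (eJ j : ℕ)) then (n : ℂ) else 0) = 0 := by
      refine Matrix.det_eq_zero_of_row_eq_zero (eI.symm ⟨x, hxI⟩) fun j => ?_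
      have h1 : ((eI (eI.symm ⟨x, hxI⟩) : ℕ)) = x := by simp
      have h2 : (eJ j : ℕ) ∈ J := (eJ j).2
      have hne : ((eI (eI.symm ⟨x, hxI⟩) : ℕ)) ≠ (eJ j : ℕ) := by
        rw [h1]
        intro hc
        exact hxJ (hc ▸ h2)
      rw [Matrix.of_apply, if_neg hne]
    rw [hdet0, zero_div]
end
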